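/- Let G be a finitely generated group with finite generating set S = {s₁, ..., s_n} (1 ∉ S), and let Γ = (G, A, B, t) be an HNN extension with A, B proper subgroups such that S ∩ (A ∪ B) = ∅. Then for every r ≥ 2, the set S⁽ʳ⁾ = {t, tʳs₁t⁻²ʳ, t³ʳs₂t⁻⁴ʳ, ..., t⁽²ⁿ⁻¹⁾ʳs_n t⁻²ⁿʳ} generates Γ and every nontrivial relation among elements of S⁽ʳ⁾ has length at least r; hence girth(Γ) = ∞. -/

import Mathlib

/- `HasInfiniteGirth G`: for every `r` there is a finite generating set of `G`
admitting no nontrivial relation of length less than `r`, i.e. `girth G = ∞`. -/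
open scoped Classical in
def HasInfiniteGirth (G : Type*) [Group G] : Prop :=
  ∀ r : ℕ, ∃ S : Finset G, Subgroup.closure (S : Set G) = ⊤ ∧
    ∀ w : FreeGroup {x // x ∈ S}, w ≠ 1 →
      FreeGroup.lift (fun s => (s : G)) w = 1 → r ≤ w.toWord.length

namespace HNNGirthAux

open HNNExtension HNNExtension.NormalWord

/-- A list of letters is reduced: no adjacent cancelling pair. -/
def Red' {α : Type*} (l : List (α × Bool)) : Prop :=
  l.Chain' fun a b => ¬(a.1 = b.1 ∧ a.2 = !b.2)

lemma red'_reduce {α : Type*} [DecidableEq α] (l : List (α × Bool)) :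
    Red' (FreeGroup.reduce l) := by
  induction l with
  | nil => simp [Red', List.Chain']
  | cons x l ih =>
    rw [FreeGroup.reduce.cons]
    rcases h : FreeGroup.reduce l with _ | ⟨y, tl⟩
    · simp [Red', List.Chain']
    · rw [h] at ih
      by_cases hc : x.1 = y.1 ∧ x.2 = !y.2
      · simp only [if_pos hc]; exact ih.tail
      · simp only [if_neg hc]
        exact List.isChain_cons_cons.2 ⟨hc, ih⟩

lemma red'_toWord {α : Type*} [DecidableEq α] (w : FreeGroup α) : Red' w.toWord := by
  rw [← FreeGroup.reduce_toWord]; exact red'_reduce _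

variable {G : Type*} [Group G] {n : ℕ}

/-- Syllable decomposition: `E s r l = (k, L)` represents `t^k * ∏ (of g * t^m)`. -/
def E (s : Fin n → G) (r : ℕ) : List (Option (Fin n) × Bool) → ℤ × List (G × ℤ)
  | [] => (0, [])
  | (none, b) :: l => ((E s r l).1 + (cond b 1 (-1)), (E s r l).2)
  | (some i, b) :: l =>
      ((((2 * (i : ℕ) + cond b 1 2) * r : ℕ) : ℤ),
        (cond b (s i) (s i)⁻¹,
          (E s r l).1 - (((2 * (i : ℕ) + cond b 2 1) * r : ℕ) : ℤ)) :: (E s r l).2)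

variable (A B : Subgroup G) (φ : A ≃* B)

/-- Product of the entry list. -/
def valL (L : List (G × ℤ)) : HNNExtension G A B φ :=
  (L.map fun p => of p.1 * t ^ p.2).prod

@[simp] lemma valL_nil : valL A B φ ([] : List (G × ℤ)) = 1 := rfl

@[simp] lemma valL_cons (p : G × ℤ) (L : List (G × ℤ)) :
    valL A B φ (p :: L) = of p.1 * t ^ p.2 * valL A B φ L := by
  simp [valL]

variable {s : Fin n → G} {r : ℕ}

lemma val_E (f : Option (Fin n) → HNNExtension G A B φ)
    (hf1 : f none = t)
    (hf2 : ∀ i : Fin n,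
      f (some i) = t ^ (((2 * (i : ℕ) + 1) * r : ℕ) : ℤ) * of (s i) *
        t ^ (-(((2 * (i : ℕ) + 2) * r : ℕ) : ℤ)))
    (l : List (Option (Fin n) × Bool)) :
    t ^ (E s r l).1 * valL A B φ (E s r l).2
      = (l.map fun x => cond x.2 (f x.1) (f x.1)⁻¹).prod := by
  induction l with
  | nil => simp [E]
  | cons x l ih =>
    obtain ⟨o, b⟩ := x
    cases o with
    | none =>
      cases b <;>
      · simp only [E, List.map_cons, List.prod_cons, cond_true, cond_false, hf1, ← ih]
        group
    | some i =>
      cases b <;>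
      · simp only [E, List.map_cons, List.prod_cons, cond_true, cond_false, hf2 i,
          valL_cons, map_inv, ← ih]
        group


/-- `(ℤˣ)`-sign of an integer. -/
def sgn (k : ℤ) : ℤˣ := if 0 ≤ k then 1 else -1

lemma sgn_mul_natAbs (k : ℤ) : ((sgn k : ℤˣ) : ℤ) * k.natAbs = k := by
  unfold sgn
  split <;> rename_i h <;>
    simp only [Units.val_one, Units.val_neg, one_mul, neg_mul] <;> omega

/-- Turn a syllable decomposition into a list of `t^{±1} * g` letters. -/
def blocks : ℤ → List (G × ℤ) → List (ℤˣ × G)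
  | k, [] => List.replicate k.natAbs (sgn k, (1 : G))
  | k, (g, m) :: L =>
      List.replicate (k.natAbs - 1) (sgn k, (1 : G)) ++ (sgn k, g) :: blocks m L

lemma blocks_ne_nil {k : ℤ} {L : List (G × ℤ)} (hk : k ≠ 0) :
    blocks k L ≠ [] := by
  cases L with
  | nil =>
    simp only [blocks]
    intro h
    have := congrArg List.length h
    simp at this
    omega
  | cons p L =>
    obtain ⟨g, m⟩ := p
    simp [blocks]

lemma blocks_prod (k : ℤ) (L : List (G × ℤ)) (hk : L ≠ [] → k ≠ 0)
    (hL : ∀ p ∈ L, p.2 ≠ 0) :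
    ((blocks k L).map fun x => (t : HNNExtension G A B φ) ^ (x.1 : ℤ) * of x.2).prod
      = t ^ k * valL A B φ L := by
  induction L generalizing k with
  | nil =>
    simp only [blocks, List.map_replicate, List.prod_replicate, map_one, mul_one, valL_nil]
    rw [← zpow_natCast, ← zpow_mul, sgn_mul_natAbs]
  | cons p L ih =>
    obtain ⟨g, m⟩ := p
    have hk0 : k ≠ 0 := hk (by simp)
    simp only [blocks, List.map_append, List.prod_append, List.map_cons, List.prod_cons,
      List.map_replicate, List.prod_replicate, map_one, mul_one, valL_cons]
    rw [ih m (fun _ => hL (g, m) (by simp)) (fun p hp => hL p (by simp [hp]))]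
    have : ((t : HNNExtension G A B φ) ^ ((sgn k : ℤˣ) : ℤ)) ^ (k.natAbs - 1) *
        (t ^ ((sgn k : ℤˣ) : ℤ) * of g) = t ^ k * of g := by
      rw [← zpow_natCast, ← zpow_mul, ← mul_assoc, ← zpow_add]
      congr 2
      have := sgn_mul_natAbs k
      have hna : 1 ≤ k.natAbs := by omega
      push_cast [Nat.cast_sub hna] at this ⊢
      linarith [this]
    rw [← mul_assoc, this]
    group

lemma blocks_chain (k : ℤ) (L : List (G × ℤ)) (hL : ∀ p ∈ L, p.1 ∉ A ∧ p.1 ∉ B) :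
    (blocks k L).Chain' fun a b => a.2 ∈ toSubgroup A B a.1 → a.1 = b.1 := by
  induction L generalizing k with
  | nil =>
    exact List.isChain_replicate_of_rel _ (fun _ => rfl)
  | cons p L ih =>
    obtain ⟨g, m⟩ := p
    have hg : g ∉ toSubgroup A B (sgn k) := by
      rcases Int.units_eq_one_or (sgn k) with h | h <;> rw [h]
      · exact (hL (g, m) (by simp)).1
      · exact (hL (g, m) (by simp)).2
    have h2 : List.Chain' (fun a b => a.2 ∈ toSubgroup A B a.1 → a.1 = b.1)
        ((sgn k, g) :: blocks m L) := by
      simp only [List.Chain']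
      rw [List.isChain_cons]
      exact ⟨fun y _ hy => absurd hy hg, ih m (fun p hp => hL p (by simp [hp]))⟩
    -- prepend the replicate
    show List.Chain' _ (List.replicate (k.natAbs - 1) (sgn k, (1 : G)) ++ (sgn k, g) :: blocks m L)
    generalize k.natAbs - 1 = c
    induction c with
    | zero => simpa using h2
    | succ c ihc =>
      simp only [List.Chain']
      rw [List.replicate_succ, List.cons_append, List.isChain_cons]
      refine ⟨?_, ihc⟩
      intro y hy _
      cases c with
      | zero =>
        simp only [List.replicate_zero, List.nil_append, List.head?_cons,
          Option.mem_def, Option.some_inj] at hy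
        subst hy; rfl
      | succ c =>
        rw [List.replicate_succ, List.cons_append, List.head?_cons] at hy
        simp only [Option.mem_def, Option.some_inj] at hy
        subst hy; rfl

lemma val_ne_one {k : ℤ} {L : List (G × ℤ)} (hk : k ≠ 0)
    (hL : ∀ p ∈ L, p.2 ≠ 0 ∧ p.1 ∉ A ∧ p.1 ∉ B) :
    (t : HNNExtension G A B φ) ^ k * valL A B φ L ≠ 1 := by
  intro h1
  let w : ReducedWord G A B :=
    { head := 1
      toList := blocks k L
      chain := blocks_chain A B k L fun p hp => (hL p hp).2 }
  have hprod : w.prod φ = t ^ k * valL A B φ L := by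
    show of (1 : G) * _ = _
    rw [map_one, one_mul]
    exact blocks_prod A B φ k L (fun _ => hk) (fun p hp => (hL p hp).1)
  have hmem : w.prod φ ∈ (of.range : Subgroup (HNNExtension G A B φ)) := by
    rw [hprod, h1]
    exact one_mem _
  have := ReducedWord.toList_eq_nil_of_mem_of_range φ w hmem
  exact blocks_ne_nil hk this


lemma bool_eq_of_not {b c : Bool} (h : ¬(b = !c)) : b = c := by
  cases b <;> cases c <;> simp_all

lemma inv_E (hsep : ∀ i, s i ∉ A ∧ s i ∉ B) (hr : 2 ≤ r) :
    ∀ l : List (Option (Fin n) × Bool), Red' l → l.length < r →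
      (∀ p ∈ (E s r l).2, p.2 ≠ 0 ∧ p.1 ∉ A ∧ p.1 ∉ B) ∧
      ((∃ b : Bool, (E s r l).2 = [] ∧ (∀ x ∈ l, x = ((none : Option (Fin n)), b)) ∧
          (E s r l).1 = cond b 1 (-1) * l.length) ∨
       ((E s r l).2 ≠ [] ∧ ∃ (b bj : Bool) (m : ℕ) (j : Fin n)
          (rest : List (Option (Fin n) × Bool)),
          l = List.replicate m ((none : Option (Fin n)), b) ++ (some j, bj) :: rest ∧
          (E s r l).1 = (((2 * (j : ℕ) + cond bj 1 2) * r : ℕ) : ℤ) + cond b 1 (-1) * m)) := by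
  intro l hl hlen
  induction l with
  | nil =>
    refine ⟨by simp [E], Or.inl ⟨true, by simp [E], by simp, by simp [E]⟩⟩
  | cons x l ih =>
    obtain ⟨o, b⟩ := x
    have hred' : Red' l := hl.tail
    have hlen' : l.length < r := by simp only [List.length_cons] at hlen; omega
    obtain ⟨ihE, ihC⟩ := ih hred' hlen'
    cases o with
    | none =>
      refine ⟨by simpa only [E] using ihE, ?_⟩
      rcases ihC with ⟨c, hL, hall, hk⟩ | ⟨hLne, c, cj, m, j, rest, hlst, hk⟩
      · -- all-nones case
        left
        cases l with
        | nil =>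
          refine ⟨b, by simpa [E] using hL, ?_, ?_⟩
          · intro x hx
            simp only [List.mem_singleton] at hx
            exact hx
          · simp only [E]
            cases b <;> simp [E]
        | cons y l2 =>
          have hy : y = (none, c) := hall y (by simp)
          have hP := (List.isChain_cons_cons.1 hl).1
          rw [hy] at hP
          have hcb : c = b := by
            have : ¬(b = !c) := fun h => hP ⟨rfl, h⟩
            exact (bool_eq_of_not this).symm
          subst hcb
          refine ⟨c, by simpa only [E] using hL, ?_, ?_⟩
          · intro x hx
            rcases List.mem_cons.1 hx with rfl | hx
            · rfl
            · exact hall x hx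
          · simp only [E, List.length_cons]
            rw [hk]
            push_cast
            cases c <;> simp <;> ring
      · -- has a some-letter
        right
        refine ⟨by simpa only [E] using hLne, ?_⟩
        cases m with
        | zero =>
          refine ⟨b, cj, 1, j, rest, ?_, ?_⟩
          · simp only [List.replicate_zero, List.nil_append] at hlst
            rw [hlst]
            simp
          · simp only [E]
            rw [hk]
            cases b <;> cases cj <;> simp <;> ring
        | succ m' =>
          have hy : l = (none, c) :: (List.replicate m' ((none : Option (Fin n)), c)
              ++ (some j, cj) :: rest) := by
            rw [hlst, List.replicate_succ, List.cons_append]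
          have hP := (List.isChain_cons_cons.1 (by rwa [hy] at hl : Red' ((none, b) ::
            ((none, c) :: _)))).1
          have hcb : c = b := by
            have : ¬(b = !c) := fun h => hP ⟨rfl, h⟩
            exact (bool_eq_of_not this).symm
          subst hcb
          refine ⟨c, cj, m' + 2, j, rest, ?_, ?_⟩
          · rw [hlst]
            simp [List.replicate_succ]
          · simp only [E]
            rw [hk]
            push_cast
            cases c <;> cases cj <;> simp <;> ring
    | some i =>
      constructor
      · -- entries
        intro p hp
        simp only [E, List.mem_cons] at hp
        rcases hp with rfl | hp
        · refine ⟨?_, ?_, ?_⟩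
          · -- the new exponent is nonzero
            have hq2 : r ≤ (2 * (i : ℕ) + cond b 2 1) * r :=
              Nat.le_mul_of_pos_left r (by cases b <;> simp)
            rcases ihC with ⟨c, hL, hall, hk⟩ | ⟨hLne, c, cj, m, j, rest, hlst, hk⟩
            · -- previous part is all nones: |k| ≤ length < r
              have hcast : ((l.length : ℤ)) < r := by exact_mod_cast hlen'
              have hq2' : (r : ℤ) ≤ (((2 * (i : ℕ) + cond b 2 1) * r : ℕ) : ℤ) := by
                exact_mod_cast hq2
              revert hq2'
              generalize (((2 * (i : ℕ) + cond b 2 1) * r : ℕ) : ℤ) = q2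
              intro hq2'
              cases c <;> simp only [cond_true, cond_false] at hk <;> omega
            · intro he
              dsimp only at he
              have hm1 : m + 1 ≤ l.length := by rw [hlst]; simp
              have h2 : (((2 * (j : ℕ) + cond cj 1 2) * r : ℕ) : ℤ) + cond c 1 (-1) * m
                  = (((2 * (i : ℕ) + cond b 2 1) * r : ℕ) : ℤ) := by
                rw [hk] at he
                linarith
              have habs : |(((2 * (j : ℕ) + cond cj 1 2) * r : ℕ) : ℤ) -
                  (((2 * (i : ℕ) + cond b 2 1) * r : ℕ) : ℤ)| ≤ m := by
                rw [abs_le]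
                cases c <;> simp only [cond_true, cond_false, one_mul, neg_one_mul] at h2 <;>
                  (constructor <;> omega)
              have hdvd : (r : ℤ) ∣ ((((2 * (j : ℕ) + cond cj 1 2) * r : ℕ) : ℤ) -
                  (((2 * (i : ℕ) + cond b 2 1) * r : ℕ) : ℤ)) := by
                refine dvd_sub ?_ ?_ <;>
                  exact Int.natCast_dvd_natCast.2 ⟨_, mul_comm _ _⟩
              have hlt : |(((2 * (j : ℕ) + cond cj 1 2) * r : ℕ) : ℤ) -
                  (((2 * (i : ℕ) + cond b 2 1) * r : ℕ) : ℤ)| < r :=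
                lt_of_le_of_lt habs (by exact_mod_cast (by omega : m < r))
              have hq12 := Int.eq_zero_of_abs_lt_dvd hdvd hlt
              have hm0 : m = 0 := by
                cases c <;> simp only [cond_true, cond_false, one_mul, neg_one_mul] at h2 <;>
                  omega
              have hq12' : 2 * (j : ℕ) + cond cj 1 2 = 2 * (i : ℕ) + cond b 2 1 := by
                have hq12n : ((2 * (j : ℕ) + cond cj 1 2) * r : ℕ)
                    = ((2 * (i : ℕ) + cond b 2 1) * r : ℕ) := by omega
                exact Nat.eq_of_mul_eq_mul_right (by omega) hq12n
              subst hm0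
              simp only [List.replicate_zero, List.nil_append] at hlst
              have hP := (List.isChain_cons_cons.1 (by rwa [hlst] at hl : Red' ((some i, b) ::
                ((some j, cj) :: rest)))).1
              cases b <;> cases cj <;> simp only [cond_true, cond_false] at hq12'
              · omega
              · have hij : i = j := by
                  have : (i : ℕ) = (j : ℕ) := by omega
                  exact Fin.ext this
                exact hP (by subst hij; simp)
              · have hij : i = j := by
                  have : (i : ℕ) = (j : ℕ) := by omega
                  exact Fin.ext this
                exact hP (by subst hij; simp)
              · omega
          · cases b <;> simp only [cond_true, cond_false]
            · exact fun h => (hsep i).1 ((Subgroup.inv_mem_iff A).1 h)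
            · exact (hsep i).1
          · cases b <;> simp only [cond_true, cond_false]
            · exact fun h => (hsep i).2 ((Subgroup.inv_mem_iff B).1 h)
            · exact (hsep i).2
        · exact ihE p hp
      · right
        refine ⟨by simp [E], true, b, 0, i, l, by simp, ?_⟩
        simp [E]


lemma key_length (hsep : ∀ i, s i ∉ A ∧ s i ∉ B) (hr : 2 ≤ r)
    (f : Option (Fin n) → HNNExtension G A B φ)
    (hf1 : f none = t)
    (hf2 : ∀ i : Fin n,
      f (some i) = t ^ (((2 * (i : ℕ) + 1) * r : ℕ) : ℤ) * of (s i) *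
        t ^ (-(((2 * (i : ℕ) + 2) * r : ℕ) : ℤ))) :
    ∀ w : FreeGroup (Option (Fin n)), w ≠ 1 → FreeGroup.lift f w = 1 →
      r ≤ w.toWord.length := by
  intro w hw h1
  by_contra hlen
  push_neg at hlen
  have hred : Red' w.toWord := red'_toWord w
  have hval : t ^ (E s r w.toWord).1 * valL A B φ (E s r w.toWord).2 = 1 := by
    rw [val_E A B φ f hf1 hf2, ← FreeGroup.lift_mk, FreeGroup.mk_toWord]
    exact h1
  obtain ⟨hE, hC⟩ := inv_E A B hsep hr w.toWord hred hlen
  rcases hC with ⟨c, hL, hall, hk⟩ | ⟨hLne, c, cj, m, j, rest, hlst, hk⟩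
  · have hlnil : w.toWord ≠ [] := fun h => hw (FreeGroup.toWord_eq_nil_iff.1 h)
    have hlp : (0 : ℤ) < w.toWord.length := by
      have : w.toWord.length ≠ 0 := fun h => hlnil (List.length_eq_zero_iff.1 h)
      omega
    have hk0 : (E s r w.toWord).1 ≠ 0 := by
      cases c <;> simp only [cond_true, cond_false] at hk <;> omega
    exact val_ne_one A B φ hk0 hE hval
  · have hm1 : m + 1 ≤ w.toWord.length := by rw [hlst]; simp
    have hq : r ≤ (2 * (j : ℕ) + cond cj 1 2) * r :=
      Nat.le_mul_of_pos_left r (by cases cj <;> simp)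
    have hq' : (r : ℤ) ≤ (((2 * (j : ℕ) + cond cj 1 2) * r : ℕ) : ℤ) := by
      exact_mod_cast hq
    have hk0 : (E s r w.toWord).1 ≠ 0 := by
      revert hq' hk
      generalize (((2 * (j : ℕ) + cond cj 1 2) * r : ℕ) : ℤ) = q1
      intro hk hq'
      cases c <;> simp only [cond_true, cond_false] at hk <;> omega
    exact val_ne_one A B φ hk0 hE hval

lemma gen_top (hgen : Subgroup.closure (Set.range s) = ⊤)
    (f : Option (Fin n) → HNNExtension G A B φ)
    (hf1 : f none = t)
    (hf2 : ∀ i : Fin n,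
      f (some i) = t ^ (((2 * (i : ℕ) + 1) * r : ℕ) : ℤ) * of (s i) *
        t ^ (-(((2 * (i : ℕ) + 2) * r : ℕ) : ℤ))) :
    Subgroup.closure (Set.range f) = ⊤ := by
  have ht : (t : HNNExtension G A B φ) ∈ Subgroup.closure (Set.range f) :=
    hf1 ▸ Subgroup.subset_closure ⟨none, rfl⟩
  have hof : ∀ g : G, of g ∈ Subgroup.closure (Set.range f) := by
    have hle : Subgroup.closure (Set.range s) ≤
        (Subgroup.closure (Set.range f)).comap (of : G →* HNNExtension G A B φ) := by
      rw [Subgroup.closure_le]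
      rintro _ ⟨i, rfl⟩
      have hfi : f (some i) ∈ Subgroup.closure (Set.range f) :=
        Subgroup.subset_closure ⟨some i, rfl⟩
      have hofeq : (of (s i) : HNNExtension G A B φ)
          = t ^ (-(((2 * (i : ℕ) + 1) * r : ℕ) : ℤ)) * f (some i)
            * t ^ ((((2 * (i : ℕ) + 2) * r : ℕ) : ℤ)) := by
        rw [hf2 i]
        group
      exact Subgroup.mem_comap.2 (by
        rw [hofeq]
        exact mul_mem (mul_mem (zpow_mem ht _) hfi) (zpow_mem ht _))
    intro g
    have hg : g ∈ Subgroup.closure (Set.range s) := by rw [hgen]; trivial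
    exact Subgroup.mem_comap.1 (hle hg)
  rw [Subgroup.eq_top_iff']
  intro x
  induction x using HNNExtension.induction_on with
  | of g => exact hof g
  | t => exact ht
  | mul x y hx hy => exact mul_mem hx hy
  | inv x hx => exact inv_mem hx

end HNNGirthAux

open scoped Classical in
/-- If `G = ⟨s₁,…,s_n⟩` with `1 ∉ S` and `S` disjoint from `A ∪ B`, where `A, B`
are proper subgroups, then for every `r ≥ 2` the set
`S⁽ʳ⁾ = {t, tʳs₁t⁻²ʳ, …, t^{(2n-1)r} s_n t^{-2nr}}` generates the HNN extension
`Γ = (G,A,B,t)` and admits no nontrivial relation of length `< r`; hence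
`girth Γ = ∞`. -/
theorem hnn_separated_generating_set_girth
    {G : Type*} [Group G] {n : ℕ} (s : Fin n → G)
    (hone : ∀ i, s i ≠ 1)
    (hgen : Subgroup.closure (Set.range s) = ⊤)
    (A B : Subgroup G) (hA : A ≠ ⊤) (hB : B ≠ ⊤)
    (hsep : ∀ i, s i ∉ A ∧ s i ∉ B) (φ : A ≃* B) :
    (∀ r : ℕ, 2 ≤ r →
      ∀ f : Option (Fin n) → HNNExtension G A B φ,
        (f none = HNNExtension.t ∧ ∀ i : Fin n,
          f (some i) = HNNExtension.t ^ (((2 * (i : ℕ) + 1) * r : ℕ) : ℤ) *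
            HNNExtension.of (s i) *
            HNNExtension.t ^ (-(((2 * (i : ℕ) + 2) * r : ℕ) : ℤ))) →
        Subgroup.closure (Set.range f) = ⊤ ∧
          ∀ w : FreeGroup (Option (Fin n)), w ≠ 1 →
            FreeGroup.lift f w = 1 → r ≤ w.toWord.length) ∧
    HasInfiniteGirth (HNNExtension G A B φ) := by
  classical
  have key : ∀ r : ℕ, 2 ≤ r →
      ∀ f : Option (Fin n) → HNNExtension G A B φ,
        (f none = HNNExtension.t ∧ ∀ i : Fin n,
          f (some i) = HNNExtension.t ^ (((2 * (i : ℕ) + 1) * r : ℕ) : ℤ) *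
            HNNExtension.of (s i) *
            HNNExtension.t ^ (-(((2 * (i : ℕ) + 2) * r : ℕ) : ℤ))) →
        Subgroup.closure (Set.range f) = ⊤ ∧
          ∀ w : FreeGroup (Option (Fin n)), w ≠ 1 →
            FreeGroup.lift f w = 1 → r ≤ w.toWord.length := by
    rintro r hr f ⟨hf1, hf2⟩
    exact ⟨HNNGirthAux.gen_top A B φ hgen f hf1 hf2,
      HNNGirthAux.key_length A B φ hsep hr f hf1 hf2⟩
  refine ⟨key, ?_⟩
  intro r0
  set r : ℕ := r0 + 2 with hrdef
  set f : Option (Fin n) → HNNExtension G A B φ := fun o =>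
    Option.rec HNNExtension.t
      (fun i => HNNExtension.t ^ (((2 * (i : ℕ) + 1) * r : ℕ) : ℤ) *
        HNNExtension.of (s i) *
        HNNExtension.t ^ (-(((2 * (i : ℕ) + 2) * r : ℕ) : ℤ))) o with hfdef
  obtain ⟨hgen', hrel⟩ := key r (by omega) f ⟨rfl, fun i => rfl⟩
  refine ⟨Finset.image f Finset.univ, ?_, ?_⟩
  · rw [Finset.coe_image, Finset.coe_univ, Set.image_univ]
    exact hgen'
  · intro w hw h1
    have hmem : ∀ y, f y ∈ Finset.image f Finset.univ := fun y =>
      Finset.mem_image_of_mem f (Finset.mem_univ y)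
    set τ : Option (Fin n) → {x // x ∈ Finset.image f Finset.univ} :=
      fun y => ⟨f y, hmem y⟩ with hτdef
    have hchoice : ∀ x : {x // x ∈ Finset.image f Finset.univ}, ∃ y, f y = (x : _) := by
      intro x
      obtain ⟨y, _, hy⟩ := Finset.mem_image.1 x.2
      exact ⟨y, hy⟩
    choose σ hσ using hchoice
    have hts : ∀ x, τ (σ x) = x := fun x => Subtype.ext (hσ x)
    set w' := FreeGroup.map σ w with hw'def
    have hw'ne : w' ≠ 1 := by
      intro h
      apply hw
      have h2 := congrArg (FreeGroup.map τ) h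
      rw [hw'def, FreeGroup.map.comp] at h2
      have hid : τ ∘ σ = id := funext hts
      rw [hid, FreeGroup.map.id, map_one] at h2
      exact h2
    have hlift : FreeGroup.lift f w' = 1 := by
      have hhom : (FreeGroup.lift f).comp (FreeGroup.map σ)
          = FreeGroup.lift fun x : {x // x ∈ Finset.image f Finset.univ} =>
              (x : HNNExtension G A B φ) := by
        apply FreeGroup.ext_hom
        intro a
        simp [hσ a]
      have h2 : FreeGroup.lift f w'
          = FreeGroup.lift (fun x : {x // x ∈ Finset.image f Finset.univ} =>
              (x : HNNExtension G A B φ)) w := by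
        rw [hw'def, ← hhom]
        rfl
      have h3 : FreeGroup.lift (fun s => s)
            (do let a ← w; pure ((a : HNNExtension G A B φ)))
          = FreeGroup.lift (fun x : {x // x ∈ Finset.image f Finset.univ} =>
              (x : HNNExtension G A B φ)) w := by
        show FreeGroup.lift (fun s => s)
            (FreeGroup.lift (fun a : {x // x ∈ Finset.image f Finset.univ} =>
              FreeGroup.of ((a : HNNExtension G A B φ))) w) = _
        rw [← MonoidHom.comp_apply]
        exact congrFun (congrArg DFunLike.coe
          (FreeGroup.ext_hom _ _ (fun a => by simp))) w
      rw [h2, ← h3]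
      exact h1
    have hr' := hrel w' hw'ne hlift
    have hlen : w'.toWord.length ≤ w.toWord.length := by
      have heq : w' = FreeGroup.mk (w.toWord.map fun x => (σ x.1, x.2)) := by
        conv_lhs => rw [hw'def, ← FreeGroup.mk_toWord (x := w)]
        rw [FreeGroup.map.mk]
      rw [heq, FreeGroup.toWord_mk]
      calc (FreeGroup.reduce (w.toWord.map fun x => (σ x.1, x.2))).length
          ≤ (w.toWord.map fun x => (σ x.1, x.2)).length :=
            FreeGroup.Red.length_le FreeGroup.reduce.red
        _ = w.toWord.length := List.length_map _
    omega
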